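/- Let n, ℓ, δ be positive integers with 2δ < ℓ ≤ n/2, ℓ ∣ n and b = n/ℓ ≥ 2. If C ⊆ 𝔽₂ⁿ is a block-by-block decodable code that detects up to δ deletions per block, then |C| ≤ 2^{n−(2δ+1)(b−1)} (equivalently, its redundancy satisfies r ≥ (2δ+1)(n/ℓ − 1)). -/

import Mathlib

/-- The `i`-th bit (0-indexed) of `x ∈ 𝔽₂ⁿ`, with default `false` out of range. -/
def bitAt (n : ℕ) (x : Fin n → Bool) (i : ℕ) : Bool :=
  if h : i < n then x ⟨i, h⟩ else false

/-- The `j`-th block (1-indexed, of length `ℓ`) of `x ∈ 𝔽₂ⁿ`, as a list. -/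
def blockList (n ℓ : ℕ) (x : Fin n → Bool) (j : ℕ) : List Bool :=
  (List.range ℓ).map (fun i => bitAt n x ((j - 1) * ℓ + i))

/-- `y` is a `δ`-per-block deletion output of `x` with deletion pattern `d`:
`y = ⟨y¹,…,y^b⟩` where each `y^j` is a subsequence of block `j` of `x`
of length `ℓ - d j`, with `d j ≤ δ`. -/
def IsDelOutput (n ℓ δ : ℕ) (x : Fin n → Bool) (d : ℕ → ℕ) (y : List Bool) : Prop :=
  ∃ ys : ℕ → List Bool,
    (∀ j ∈ Finset.Icc 1 (n / ℓ),
      (ys j).Sublist (blockList n ℓ x j) ∧ d j ≤ δ ∧ (ys j).length = ℓ - d j) ∧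
    y = ((List.range (n / ℓ)).map (fun j => ys (j + 1))).flatten

/-- `C ⊆ 𝔽₂ⁿ` detects up to `δ` deletions per block. -/
def Detects (n ℓ δ : ℕ) (C : Set (Fin n → Bool)) : Prop :=
  ∀ x ∈ C, ∀ x' ∈ C, ∀ d d' : ℕ → ℕ, ∀ y : List Bool,
    IsDelOutput n ℓ δ x d y → IsDelOutput n ℓ δ x' d' y →
    ∀ j ∈ Finset.Icc 1 (n / ℓ), d j = d' j

/-- The 0-indexed starting position `α_j - 1` of block `j` in the output,
given the deletion pattern `d`. -/
def startIdx (ℓ : ℕ) (d : ℕ → ℕ) (j : ℕ) : ℕ :=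
  ∑ m ∈ Finset.Icc 1 (j - 1), (ℓ - d m)

/-- The window `(y_{α_j},…,y_{α_j+ℓ-1})` of length `ℓ` of the list `y`
starting at 0-indexed position `s = α_j - 1`. -/
def window (ℓ : ℕ) (y : List Bool) (s : ℕ) : Fin ℓ → Bool :=
  fun i => y.getD (s + i) false

/-- `C` is block-by-block decodable. -/
def BlockDecodable (n ℓ δ : ℕ) (C : Set (Fin n → Bool)) : Prop :=
  ∃ f : ℕ → (Fin ℓ → Bool) → ℕ,
    (∀ j w, f j w ≤ δ) ∧
    ∀ x ∈ C, ∀ d : ℕ → ℕ, ∀ y : List Bool, IsDelOutput n ℓ δ x d y →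
      ∀ j ∈ Finset.Icc 1 (n / ℓ - 1),
        f j (window ℓ y (startIdx ℓ d j)) = d j

namespace RedundancyProof

/-- canonical deletion pattern: `e` deletions in block `j`, `i` in block `j+1`. -/
def dPat (j e i : ℕ) : ℕ → ℕ := fun m => if m = j then e else if m = j + 1 then i else 0

/-- canonical per-block outputs. -/
def ysFun (n ℓ : ℕ) (x : Fin n → Bool) (j e i : ℕ) : ℕ → List Bool :=
  fun m =>
    if m = j then (blockList n ℓ x j).take (ℓ - e)
    else if m = j + 1 then (blockList n ℓ x (j + 1)).drop i
    else blockList n ℓ x m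

/-- the canonical output string. -/
def yOut (n ℓ : ℕ) (x : Fin n → Bool) (j e i : ℕ) : List Bool :=
  ((List.range (n / ℓ)).map (fun t => ysFun n ℓ x j e i (t + 1))).flatten

/-- the window seen by the decoder at block `j`, in terms of the bits of `x`. -/
def Wfun (n ℓ : ℕ) (x : Fin n → Bool) (j e i : ℕ) : Fin ℓ → Bool :=
  fun t =>
    if (t : ℕ) < ℓ - e then bitAt n x ((j - 1) * ℓ + t)
    else bitAt n x (j * ℓ + i + ((t : ℕ) - (ℓ - e)))

lemma length_blockList (n ℓ : ℕ) (x : Fin n → Bool) (j : ℕ) :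
    (blockList n ℓ x j).length = ℓ := by simp [blockList]

lemma blockList_getD (n ℓ : ℕ) (x : Fin n → Bool) (j t : ℕ) (ht : t < ℓ) :
    (blockList n ℓ x j).getD t false = bitAt n x ((j - 1) * ℓ + t) := by
  simp [blockList, List.getD_eq_getElem?_getD, List.getElem?_map, List.getElem?_range ht]

lemma isDel (n ℓ δ : ℕ) (x : Fin n → Bool) (j e i : ℕ) (he : e ≤ δ) (hi : i ≤ δ) :
    IsDelOutput n ℓ δ x (dPat j e i) (yOut n ℓ x j e i) := by
  refine ⟨ysFun n ℓ x j e i, fun m _ => ?_, rfl⟩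
  unfold ysFun dPat
  by_cases hm : m = j
  · subst hm
    simp only [if_pos rfl]
    exact ⟨List.take_sublist _ _, he, by
      simp [List.length_take, length_blockList, Nat.min_eq_left (Nat.sub_le ℓ e)]⟩
  · by_cases hm' : m = j + 1
    · subst hm'
      simp only [if_neg hm, if_pos rfl]
      exact ⟨List.drop_sublist _ _, hi, by simp [List.length_drop, length_blockList]⟩
    · simp only [if_neg hm, if_neg hm']
      exact ⟨List.Sublist.refl _, Nat.zero_le _, by simp [length_blockList]⟩

lemma startIdx_dPat (ℓ j e i : ℕ) : startIdx ℓ (dPat j e i) j = (j - 1) * ℓ := by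
  unfold startIdx
  have : ∀ m ∈ Finset.Icc 1 (j - 1), ℓ - dPat j e i m = ℓ := by
    intro m hm
    rw [Finset.mem_Icc] at hm
    have h1 : m ≠ j := by omega
    have h2 : m ≠ j + 1 := by omega
    simp [dPat, h1, h2]
  rw [Finset.sum_congr rfl this]
  simp [Nat.card_Icc, mul_comm]

lemma yOut_decomp (n ℓ : ℕ) (x : Fin n → Bool) (j e i : ℕ) (hj1 : 1 ≤ j)
    (hjb : j + 1 ≤ n / ℓ) :
    yOut n ℓ x j e i =
      ((List.range (j - 1)).map (fun t => blockList n ℓ x (t + 1))).flatten ++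
        ((blockList n ℓ x j).take (ℓ - e) ++
          ((blockList n ℓ x (j + 1)).drop i ++
            ((List.range (n / ℓ - j - 1)).map (fun t => blockList n ℓ x (j + 2 + t))).flatten)) := by
  have hb : n / ℓ = (j - 1) + (2 + (n / ℓ - j - 1)) := by omega
  have hrange2 : ∀ m : ℕ, List.range (2 + m) = 0 :: 1 :: (List.range m).map (fun t => 2 + t) := by
    intro m
    rw [List.range_add]
    rfl
  unfold yOut
  conv_lhs => rw [hb, List.range_add]
  rw [List.map_append, List.flatten_append]
  congr 1
  · apply congrArg
    apply List.map_congr_left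
    intro a ha
    rw [List.mem_range] at ha
    have h1 : a + 1 ≠ j := by omega
    have h2 : a + 1 ≠ j + 1 := by omega
    simp [ysFun, h1, h2]
    intro h3
    omega
  · rw [hrange2, List.map_map]
    simp only [List.map_cons, List.flatten_cons, Function.comp_apply, List.map_map]
    have e0 : j - 1 + 0 + 1 = j := by omega
    have e1 : j - 1 + 1 + 1 = j + 1 := by omega
    try simp only [e0, e1]
    simp only [ysFun, if_pos rfl, if_neg (by omega : j + 1 ≠ j), if_pos rfl]
    congr 2
    apply congrArg
    apply List.map_congr_left
    intro a _
    have h1 : j - 1 + (2 + a) + 1 ≠ j := by omega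
    have h2 : j - 1 + (2 + a) + 1 ≠ j + 1 := by omega
    have h3 : j - 1 + (2 + a) + 1 = j + 2 + a := by omega
    show ysFun n ℓ x j e i (j - 1 + (2 + a) + 1) = _
    rw [h3]
    unfold ysFun
    rw [if_neg (by omega : ¬ j + 2 + a = j), if_neg (by omega : ¬ j + 2 + a = j + 1)]

lemma window_yOut (n ℓ δ : ℕ) (x : Fin n → Bool) (j e i : ℕ) (hδℓ : 2 * δ < ℓ)
    (hj1 : 1 ≤ j) (hjb : j + 1 ≤ n / ℓ) (he : e ≤ δ) (hi : i ≤ δ) :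
    window ℓ (yOut n ℓ x j e i) ((j - 1) * ℓ) = Wfun n ℓ x j e i := by
  funext t
  have htl : (t : ℕ) < ℓ := t.isLt
  unfold window Wfun
  rw [yOut_decomp n ℓ x j e i hj1 hjb]
  have hlenA : (((List.range (j - 1)).map (fun t => blockList n ℓ x (t + 1))).flatten).length
      = (j - 1) * ℓ := by
    rw [List.length_flatten, List.map_map]
    have : (List.range (j - 1)).map (List.length ∘ fun t => blockList n ℓ x (t + 1)) =
        (List.range (j - 1)).map (fun _ => ℓ) := by
      apply List.map_congr_left; intro a _; simp [length_blockList]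
    rw [this, List.map_const', List.sum_replicate]
    simp [mul_comm]
  rw [List.getD_append_right _ _ _ _ (by omega), hlenA]
  have hidx : (j - 1) * ℓ + (t : ℕ) - (j - 1) * ℓ = (t : ℕ) := by omega
  rw [hidx]
  have hlentake : ((blockList n ℓ x j).take (ℓ - e)).length = ℓ - e := by
    simp [List.length_take, length_blockList, Nat.min_eq_left (Nat.sub_le ℓ e)]
  by_cases ht : (t : ℕ) < ℓ - e
  · rw [if_pos ht, List.getD_append _ _ _ _ (by omega)]
    have : ((blockList n ℓ x j).take (ℓ - e)).getD (t : ℕ) false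
        = (blockList n ℓ x j).getD (t : ℕ) false := by
      have h1 : (t : ℕ) < ((blockList n ℓ x j).take (ℓ - e)).length := by omega
      have h2 : (t : ℕ) < (blockList n ℓ x j).length := by rw [length_blockList]; omega
      rw [List.getD_eq_getElem _ _ h1, List.getD_eq_getElem _ _ h2, List.getElem_take]
    rw [this, blockList_getD _ _ _ _ _ htl]
  · rw [if_neg ht, List.getD_append_right _ _ _ _ (by omega), hlentake]
    set s := (t : ℕ) - (ℓ - e) with hs
    have hse : s < e := by omega
    have hlendrop : ((blockList n ℓ x (j + 1)).drop i).length = ℓ - i := by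
      simp [List.length_drop, length_blockList]
    rw [List.getD_append _ _ _ _ (by omega)]
    have h1 : s < ((blockList n ℓ x (j + 1)).drop i).length := by omega
    have h2 : i + s < (blockList n ℓ x (j + 1)).length := by rw [length_blockList]; omega
    rw [List.getD_eq_getElem _ _ h1, List.getElem_drop, ← List.getD_eq_getElem _ _ h2,
      blockList_getD _ _ _ _ _ (by omega : i + s < ℓ)]
    have h4 : j + 1 - 1 = j := by omega
    rw [h4, Nat.add_assoc]

section Key

variable {n ℓ δ : ℕ} {C : Set (Fin n → Bool)} {f : ℕ → (Fin ℓ → Bool) → ℕ}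

/-- The decodability property specialised to our canonical outputs. -/
lemma keyA (hδℓ : 2 * δ < ℓ)
    (hf : ∀ x ∈ C, ∀ d : ℕ → ℕ, ∀ y : List Bool, IsDelOutput n ℓ δ x d y →
      ∀ j ∈ Finset.Icc 1 (n / ℓ - 1), f j (window ℓ y (startIdx ℓ d j)) = d j)
    {x : Fin n → Bool} (hx : x ∈ C) {j e i : ℕ}
    (hj1 : 1 ≤ j) (hjb : j ≤ n / ℓ - 1) (hb2 : 2 ≤ n / ℓ) (he : e ≤ δ) (hi : i ≤ δ) :
    f j (Wfun n ℓ x j e i) = e := by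
  have hjb' : j + 1 ≤ n / ℓ := by omega
  have h := hf x hx (dPat j e i) (yOut n ℓ x j e i) (isDel n ℓ δ x j e i he hi) j
    (Finset.mem_Icc.mpr ⟨hj1, hjb⟩)
  rw [startIdx_dPat, window_yOut n ℓ δ x j e i hδℓ hj1 hjb' he hi] at h
  simpa [dPat] using h


lemma bool_ne {a b : Bool} (h : ¬ a = b) : a = !b := by
  cases a <;> cases b <;> simp_all

/-- the first `δ+1` bits of block `j+1` all equal the complement of the last bit
of block `j`. -/
lemma keyB1 (hδℓ : 2 * δ < ℓ) (hδ : 0 < δ)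
    (hf : ∀ x ∈ C, ∀ d : ℕ → ℕ, ∀ y : List Bool, IsDelOutput n ℓ δ x d y →
      ∀ j ∈ Finset.Icc 1 (n / ℓ - 1), f j (window ℓ y (startIdx ℓ d j)) = d j)
    {x : Fin n → Bool} (hx : x ∈ C) {j : ℕ}
    (hj1 : 1 ≤ j) (hjb : j ≤ n / ℓ - 1) (hb2 : 2 ≤ n / ℓ) :
    ∀ s ≤ δ, bitAt n x (j * ℓ + s) = !bitAt n x ((j - 1) * ℓ + (ℓ - 1)) := by
  intro s hs
  by_contra hcon
  have heq : bitAt n x (j * ℓ + s) = bitAt n x ((j - 1) * ℓ + (ℓ - 1)) := by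
    cases h1 : bitAt n x (j * ℓ + s) <;> cases h2 : bitAt n x ((j - 1) * ℓ + (ℓ - 1)) <;>
      simp_all
  have hW : Wfun n ℓ x j 1 s = Wfun n ℓ x j 0 0 := by
    funext t
    have htl : (t : ℕ) < ℓ := t.isLt
    unfold Wfun
    by_cases ht : (t : ℕ) < ℓ - 1
    · rw [if_pos ht, if_pos (by omega : (t : ℕ) < ℓ - 0)]
    · rw [if_neg ht, if_pos (by omega : (t : ℕ) < ℓ - 0)]
      have h1 : j * ℓ + s + ((t : ℕ) - (ℓ - 1)) = j * ℓ + s := by omega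
      have h2 : (t : ℕ) = ℓ - 1 := by omega
      rw [h1, h2, heq]
  have e1 := keyA hδℓ hf hx hj1 hjb hb2 (by omega : 1 ≤ δ) hs
  have e0 := keyA hδℓ hf hx hj1 hjb hb2 (Nat.zero_le δ) (Nat.zero_le δ)
  rw [hW, e0] at e1
  exact absurd e1 (by omega)

/-- the last `δ` bits of block `j` are all equal. -/
lemma keyB2 (hδℓ : 2 * δ < ℓ) (hδ : 0 < δ)
    (hf : ∀ x ∈ C, ∀ d : ℕ → ℕ, ∀ y : List Bool, IsDelOutput n ℓ δ x d y →
      ∀ j ∈ Finset.Icc 1 (n / ℓ - 1), f j (window ℓ y (startIdx ℓ d j)) = d j)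
    {x : Fin n → Bool} (hx : x ∈ C) {j : ℕ}
    (hj1 : 1 ≤ j) (hjb : j ≤ n / ℓ - 1) (hb2 : 2 ≤ n / ℓ) :
    ∀ k < δ, bitAt n x ((j - 1) * ℓ + (ℓ - 1 - k)) = bitAt n x ((j - 1) * ℓ + (ℓ - 1)) := by
  intro k hk
  have hB1 := keyB1 hδℓ hδ hf hx hj1 hjb hb2
  by_contra hcon
  have heq : bitAt n x ((j - 1) * ℓ + (ℓ - 1 - k)) = !bitAt n x ((j - 1) * ℓ + (ℓ - 1)) :=
    bool_ne hcon
  have hW : Wfun n ℓ x j k 0 = Wfun n ℓ x j (k + 1) 0 := by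
    funext t
    have htl : (t : ℕ) < ℓ := t.isLt
    unfold Wfun
    by_cases ht : (t : ℕ) < ℓ - (k + 1)
    · rw [if_pos (by omega : (t : ℕ) < ℓ - k), if_pos ht]
    · by_cases ht2 : (t : ℕ) < ℓ - k
      · -- t = ℓ - 1 - k
        rw [if_pos ht2, if_neg ht]
        have h2 : (t : ℕ) = ℓ - 1 - k := by omega
        have h3 : j * ℓ + 0 + ((t : ℕ) - (ℓ - (k + 1))) = j * ℓ + 0 := by omega
        rw [h3, h2, heq, hB1 0 (Nat.zero_le δ)]
      · rw [if_neg ht2, if_neg ht]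
        have hs1 : (t : ℕ) - (ℓ - k) ≤ δ := by omega
        have hs2 : (t : ℕ) - (ℓ - (k + 1)) ≤ δ := by omega
        rw [show j * ℓ + 0 + ((t : ℕ) - (ℓ - k)) = j * ℓ + ((t : ℕ) - (ℓ - k)) from by omega,
          show j * ℓ + 0 + ((t : ℕ) - (ℓ - (k + 1))) = j * ℓ + ((t : ℕ) - (ℓ - (k + 1))) from
            by omega, hB1 _ hs1, hB1 _ hs2]
  have e1 := keyA hδℓ hf hx hj1 hjb hb2 (by omega : k ≤ δ) (Nat.zero_le δ)
  have e2 := keyA hδℓ hf hx hj1 hjb hb2 (by omega : k + 1 ≤ δ) (Nat.zero_le δ)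
  rw [hW, e2] at e1
  exact absurd e1 (by omega)

/-- two codewords agreeing on the first `ℓ - δ` bits of block `j` have the same
boundary class at boundary `j`. -/
lemma keyC (hδℓ : 2 * δ < ℓ) (hδ : 0 < δ)
    (hf : ∀ x ∈ C, ∀ d : ℕ → ℕ, ∀ y : List Bool, IsDelOutput n ℓ δ x d y →
      ∀ j ∈ Finset.Icc 1 (n / ℓ - 1), f j (window ℓ y (startIdx ℓ d j)) = d j)
    {x x' : Fin n → Bool} (hx : x ∈ C) (hx' : x' ∈ C) {j : ℕ}
    (hj1 : 1 ≤ j) (hjb : j ≤ n / ℓ - 1) (hb2 : 2 ≤ n / ℓ)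
    (hag : ∀ t < ℓ - δ, bitAt n x ((j - 1) * ℓ + t) = bitAt n x' ((j - 1) * ℓ + t)) :
    bitAt n x (j * ℓ) = bitAt n x' (j * ℓ) := by
  have hB1 := keyB1 hδℓ hδ hf hx hj1 hjb hb2
  have hB1' := keyB1 hδℓ hδ hf hx' hj1 hjb hb2
  have hB2' := keyB2 hδℓ hδ hf hx' hj1 hjb hb2
  by_contra hcon
  have hne : bitAt n x' (j * ℓ) = !bitAt n x (j * ℓ) := bool_ne (fun h => hcon h.symm)
  have hW : Wfun n ℓ x j δ 0 = Wfun n ℓ x' j 0 0 := by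
    funext t
    have htl : (t : ℕ) < ℓ := t.isLt
    unfold Wfun
    by_cases ht : (t : ℕ) < ℓ - δ
    · rw [if_pos ht, if_pos (by omega : (t : ℕ) < ℓ - 0)]
      exact hag _ ht
    · rw [if_neg ht, if_pos (by omega : (t : ℕ) < ℓ - 0)]
      -- LHS equals bitAt x (j*ℓ)
      have hs : (t : ℕ) - (ℓ - δ) ≤ δ := by omega
      have hL : bitAt n x (j * ℓ + 0 + ((t : ℕ) - (ℓ - δ))) = bitAt n x (j * ℓ) := by
        rw [show j * ℓ + 0 + ((t : ℕ) - (ℓ - δ)) = j * ℓ + ((t : ℕ) - (ℓ - δ)) from by omega,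
          hB1 _ hs, ← hB1 0 (Nat.zero_le δ), Nat.add_zero]
      -- RHS equals !bitAt x' (j*ℓ) = bitAt x (j*ℓ)
      have hk : ℓ - 1 - (ℓ - 1 - (t : ℕ)) = (t : ℕ) := by omega
      have hkδ : ℓ - 1 - (t : ℕ) < δ := by omega
      have hR : bitAt n x' ((j - 1) * ℓ + (t : ℕ)) = !bitAt n x' (j * ℓ) := by
        rw [← hk, hB2' _ hkδ]
        have := hB1' 0 (Nat.zero_le δ)
        rw [Nat.add_zero] at this
        cases h1 : bitAt n x' ((j - 1) * ℓ + (ℓ - 1)) <;> cases h2 : bitAt n x' (j * ℓ) <;>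
          simp_all
      rw [hL, hR, hne, Bool.not_not]
  have e1 := keyA hδℓ hf hx hj1 hjb hb2 (le_refl δ) (Nat.zero_le δ)
  have e0 := keyA hδℓ hf hx' hj1 hjb hb2 (Nat.zero_le δ) (Nat.zero_le δ)
  rw [hW, e0] at e1
  omega

end Key

end RedundancyProof

/-- Any block-by-block decodable code detecting up to d deletions
per block satisfies |C| <= 2^(n - (2d+1)(b-1)). -/
theorem redundancy_lower_bound_block_decodable
    (n ℓ δ : ℕ) (hδ : 0 < δ) (hℓ : 2 * δ < ℓ) (hℓn : ℓ ≤ n / 2) (hdvd : ℓ ∣ n)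
    (hb : 2 ≤ n / ℓ)
    (C : Set (Fin n → Bool)) (hC : Detects n ℓ δ C) (hBD : BlockDecodable n ℓ δ C) :
    C.ncard ≤ 2 ^ (n - (2 * δ + 1) * (n / ℓ - 1)) := by
  classical
  obtain ⟨f, hfle, hf⟩ := hBD
  have hn : (n / ℓ) * ℓ = n := Nat.div_mul_cancel hdvd
  have hℓpos : 0 < ℓ := by omega
  set D : Finset ℕ :=
    (Finset.Icc 1 (n / ℓ - 1)).biUnion (fun j => Finset.Icc (j * ℓ - δ) (j * ℓ + δ)) with hD
  have hmemD : ∀ p : ℕ, p ∈ D ↔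
      ∃ j, (1 ≤ j ∧ j ≤ n / ℓ - 1) ∧ (j * ℓ - δ ≤ p ∧ p ≤ j * ℓ + δ) := by
    intro p
    simp [hD, Finset.mem_biUnion, Finset.mem_Icc]
  have hjl : ∀ j : ℕ, 1 ≤ j → ℓ ≤ j * ℓ := by
    intro j hj
    calc ℓ = 1 * ℓ := (one_mul ℓ).symm
    _ ≤ j * ℓ := Nat.mul_le_mul_right ℓ hj
  have hjn : ∀ j : ℕ, j ≤ n / ℓ - 1 → j * ℓ + ℓ ≤ n := by
    intro j hj
    have h1 : j + 1 ≤ n / ℓ := by omega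
    calc j * ℓ + ℓ = (j + 1) * ℓ := (Nat.succ_mul j ℓ).symm
    _ ≤ (n / ℓ) * ℓ := Nat.mul_le_mul_right ℓ h1
    _ = n := hn
  -- key determination: two codewords agreeing off `D` agree everywhere
  have main : ∀ x ∈ C, ∀ x' ∈ C,
      (∀ p : ℕ, p < n → p ∉ D → bitAt n x p = bitAt n x' p) →
      ∀ p : ℕ, p < n → bitAt n x p = bitAt n x' p := by
    intro x hx x' hx' hout p
    induction p using Nat.strong_induction_on with
    | _ p IH =>
    intro hpn
    by_cases hpD : p ∈ D
    · obtain ⟨j, ⟨hj1, hjb⟩, hl, hu⟩ := (hmemD p).mp hpD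
      have hℓj : ℓ ≤ j * ℓ := hjl j hj1
      have hjlsub : (j - 1) * ℓ + ℓ = j * ℓ := by
        calc (j - 1) * ℓ + ℓ = (j - 1 + 1) * ℓ := (Nat.succ_mul _ ℓ).symm
        _ = j * ℓ := by rw [Nat.sub_add_cancel hj1]
      have hjn' : j * ℓ + ℓ ≤ n := hjn j hjb
      have hcc : bitAt n x (j * ℓ) = bitAt n x' (j * ℓ) := by
        apply RedundancyProof.keyC hℓ hδ hf hx hx' hj1 hjb hb
        intro t ht
        exact IH ((j - 1) * ℓ + t) (by omega) (by omega)
      by_cases hpj : j * ℓ ≤ p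
      · have hs : p - j * ℓ ≤ δ := by omega
        have hx1 := RedundancyProof.keyB1 hℓ hδ hf hx hj1 hjb hb (p - j * ℓ) hs
        have hx0 := RedundancyProof.keyB1 hℓ hδ hf hx hj1 hjb hb 0 (Nat.zero_le δ)
        have hx1' := RedundancyProof.keyB1 hℓ hδ hf hx' hj1 hjb hb (p - j * ℓ) hs
        have hx0' := RedundancyProof.keyB1 hℓ hδ hf hx' hj1 hjb hb 0 (Nat.zero_le δ)
        rw [Nat.add_zero] at hx0 hx0'
        rw [show p = j * ℓ + (p - j * ℓ) from by omega, hx1, hx1', ← hx0, ← hx0', hcc]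
      · have hk : j * ℓ - 1 - p < δ := by omega
        have hp' : p = (j - 1) * ℓ + (ℓ - 1 - (j * ℓ - 1 - p)) := by omega
        have hx2 := RedundancyProof.keyB2 hℓ hδ hf hx hj1 hjb hb _ hk
        have hx2' := RedundancyProof.keyB2 hℓ hδ hf hx' hj1 hjb hb _ hk
        have hx0 := RedundancyProof.keyB1 hℓ hδ hf hx hj1 hjb hb 0 (Nat.zero_le δ)
        have hx0' := RedundancyProof.keyB1 hℓ hδ hf hx' hj1 hjb hb 0 (Nat.zero_le δ)
        rw [Nat.add_zero] at hx0 hx0'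
        rw [hp', hx2, hx2']
        have hcc' := hcc
        rw [hx0, hx0'] at hcc'
        exact Bool.not_inj hcc' 
    · exact hout p hpn hpD
  -- the injection into functions on the complement of `D`
  have hDlt : ∀ m ∈ D, m < n := by
    intro m hm
    obtain ⟨j, ⟨hj1, hjb⟩, _, hu⟩ := (hmemD m).mp hm
    have := hjn j hjb
    omega
  set T := {q : Fin n // (q : ℕ) ∉ D} with hT
  have hinj : Function.Injective (fun (xc : ↥C) (t : T) => (xc : Fin n → Bool) t.1) := by
    intro x x' h
    have hbit : ∀ p : ℕ, p < n → bitAt n (x : Fin n → Bool) p = bitAt n (x' : Fin n → Bool) p := by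
      apply main _ x.2 _ x'.2
      intro p hp hpD
      have := congrFun h (⟨⟨p, hp⟩, hpD⟩ : T)
      simpa [bitAt, hp] using this
    apply Subtype.ext
    funext q
    have := hbit q.1 q.isLt
    simpa [bitAt, q.isLt] using this
  have hle : Nat.card ↥C ≤ Nat.card (T → Bool) := Nat.card_le_card_of_injective _ hinj
  -- cardinality computations
  have hcardT : Fintype.card T = n - (n / ℓ - 1) * (2 * δ + 1) := by
    have h1 : Fintype.card T = (Finset.univ.filter (fun q : Fin n => (q : ℕ) ∉ D)).card :=
      Fintype.card_subtype _
    have h2 : (Finset.univ.filter (fun q : Fin n => (q : ℕ) ∈ D)).card +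
        (Finset.univ.filter (fun q : Fin n => ¬ (q : ℕ) ∈ D)).card = n := by
      rw [Finset.card_filter_add_card_filter_not, Finset.card_univ, Fintype.card_fin]
    have h3 : (Finset.univ.filter (fun q : Fin n => (q : ℕ) ∈ D)).card = D.card := by
      have : Finset.univ.filter (fun q : Fin n => (q : ℕ) ∈ D) = D.attachFin hDlt := by
        ext q
        simp [Finset.mem_attachFin]
      rw [this, Finset.card_attachFin]
    have h4 : D.card = (n / ℓ - 1) * (2 * δ + 1) := by
      rw [hD, Finset.card_biUnion]
      · have : ∀ j ∈ Finset.Icc 1 (n / ℓ - 1),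
            (Finset.Icc (j * ℓ - δ) (j * ℓ + δ)).card = 2 * δ + 1 := by
          intro j hj
          rw [Finset.mem_Icc] at hj
          have := hjl j hj.1
          rw [Nat.card_Icc]
          omega
        rw [Finset.sum_congr rfl this, Finset.sum_const, Nat.card_Icc, smul_eq_mul]
        congr 1
      · intro j1 hj1 j2 hj2 hne
        rw [Finset.mem_coe, Finset.mem_Icc] at hj1 hj2
        rw [Function.onFun, Finset.disjoint_left]
        intro m hm1 hm2
        rw [Finset.mem_Icc] at hm1 hm2
        have e1 := hjl j1 hj1.1
        have e2 := hjl j2 hj2.1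
        rcases Nat.lt_or_ge j1 j2 with hlt | hge
        · have : (j1 + 1) * ℓ ≤ j2 * ℓ := Nat.mul_le_mul_right ℓ (by omega)
          have hsm : (j1 + 1) * ℓ = j1 * ℓ + ℓ := Nat.succ_mul j1 ℓ
          omega
        · have hlt2 : j2 < j1 := by omega
          have : (j2 + 1) * ℓ ≤ j1 * ℓ := Nat.mul_le_mul_right ℓ (by omega)
          have hsm : (j2 + 1) * ℓ = j2 * ℓ + ℓ := Nat.succ_mul j2 ℓ
          omega
    omega
  have hfin : Nat.card (T → Bool) = 2 ^ (n - (2 * δ + 1) * (n / ℓ - 1)) := by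
    rw [Nat.card_eq_fintype_card, Fintype.card_fun, Fintype.card_bool, hcardT, mul_comm (2 * δ + 1)]
  calc C.ncard = Nat.card ↥C := (Nat.card_coe_set_eq C).symm
  _ ≤ Nat.card (T → Bool) := hle
  _ = 2 ^ (n - (2 * δ + 1) * (n / ℓ - 1)) := hfin
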